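/- If α and β are commuting automorphisms of the Heawood graph such that α, β, and αβ each have order 2 (so that {1, α, β, αβ} is a Klein four-subgroup of the automorphism group), then at least one of α, β, αβ fixes both endpoints of some edge of the Heawood graph; in particular, at least one of α, β, αβ fixes a vertex. -/

import Mathlib

/-- The Heawood graph `C₁₄` on vertex set `ZMod 14`: distinct vertices `i` and `j` are
adjacent iff `j = i ± 1`, or `i` is even and `j = i + 5`, or `i` is odd and `j = i - 5`
(LCF notation `[5, -5]⁷`). -/
def heawood : SimpleGraph (ZMod 14) where
  Adj i j := i ≠ j ∧ (j = i + 1 ∨ j = i - 1 ∨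
    (i.val % 2 = 0 ∧ j = i + 5) ∨ (i.val % 2 = 1 ∧ j = i - 5))
  symm := by constructor; intro i j h; revert i j; decide
  loopless := by constructor; intro i h; revert i h; decide

instance : DecidableRel heawood.Adj := fun _ _ =>
  inferInstanceAs (Decidable (_ ∧ _))

/-- An involution mapping an odd-cardinality finset to itself has a fixed point there. -/
lemma odd_invol_fix {V : Type*} [DecidableEq V] (f : V → V) (s : Finset V)
    (hmap : ∀ x ∈ s, f x ∈ s) (hinv : ∀ x ∈ s, f (f x) = x) (hodd : Odd s.card) :
    ∃ x ∈ s, f x = x := by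
  induction s using Finset.strongInduction with
  | _ s ih =>
    by_contra hno
    push_neg at hno
    obtain ⟨k, hk⟩ := hodd
    have hpos : 0 < s.card := by omega
    obtain ⟨x, hx⟩ := Finset.card_pos.mp hpos
    have hfx : f x ∈ s := hmap x hx
    have hne : f x ≠ x := hno x hx
    set t : Finset V := s \ {x, f x} with ht
    have hsub : {x, f x} ⊆ s := by
      intro y hy
      simp only [Finset.mem_insert, Finset.mem_singleton] at hy
      rcases hy with rfl | rfl <;> assumption
    have hcardpair : ({x, f x} : Finset V).card = 2 := by
      rw [Finset.card_insert_of_notMem (by simpa using hne.symm), Finset.card_singleton]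
    have hcardt : t.card = s.card - 2 := by
      rw [ht, Finset.card_sdiff_of_subset hsub, hcardpair]
    have htsub : t ⊂ s := by
      refine Finset.sdiff_ssubset ?_ ?_
      · exact hsub
      · exact ⟨x, Finset.mem_insert_self _ _⟩
    have hcard2 : 2 ≤ s.card := by
      calc 2 = ({x, f x} : Finset V).card := hcardpair.symm
        _ ≤ s.card := Finset.card_le_card hsub
    have hmem_t : ∀ y, y ∈ t ↔ y ∈ s ∧ y ≠ x ∧ y ≠ f x := by
      intro y
      simp [ht, and_assoc]
    have hmapt : ∀ y ∈ t, f y ∈ t := by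
      intro y hy
      rw [hmem_t] at hy ⊢
      obtain ⟨hys, hyx, hyfx⟩ := hy
      refine ⟨hmap y hys, ?_, ?_⟩
      · intro h
        exact hyfx (by rw [← hinv y hys, h])
      · intro h
        have := hinv y hys
        rw [h, hinv x hx] at this
        exact hyx this.symm
    have hinvt : ∀ y ∈ t, f (f y) = y := by
      intro y hy
      exact hinv y ((hmem_t y).mp hy).1
    have hoddt : Odd t.card := by
      rw [hcardt]
      exact ⟨k - 1, by omega⟩
    obtain ⟨y, hyt, hyfix⟩ := ih t htsub hmapt hinvt hoddt
    exact hno y ((hmem_t y).mp hyt).1 hyfix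

/-- Parity formula: an automorphism shifts vertex parity uniformly. -/
lemma heawood_parity_formula (γ : heawood ≃g heawood) (v : ZMod 14) :
    (γ v).val % 2 = ((γ 0).val + v.val) % 2 := by
  have adjp : ∀ u w : ZMod 14, heawood.Adj u w → u.val % 2 + w.val % 2 = 1 := by decide
  have step : ∀ u w : ZMod 14, heawood.Adj u w →
      (γ u).val % 2 = ((γ 0).val + u.val) % 2 →
      (γ w).val % 2 = ((γ 0).val + w.val) % 2 := by
    intro u w huw hu
    have h1 := adjp u w huw
    have h2 := adjp (γ u) (γ w) (γ.map_adj_iff.mpr huw)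
    omega
  have h0 : (γ 0).val % 2 = ((γ 0).val + (0 : ZMod 14).val) % 2 := by
    simp
  have h1 := step 0 1 (by decide) h0
  have h2 := step 1 2 (by decide) h1
  have h3 := step 2 3 (by decide) h2
  have h4 := step 3 4 (by decide) h3
  have h5 := step 4 5 (by decide) h4
  have h6 := step 5 6 (by decide) h5
  have h7 := step 6 7 (by decide) h6
  have h8 := step 7 8 (by decide) h7
  have h9 := step 8 9 (by decide) h8
  have h10 := step 9 10 (by decide) h9
  have h11 := step 10 11 (by decide) h10
  have h12 := step 11 12 (by decide) h11
  have h13 := step 12 13 (by decide) h12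
  have hv : v = 0 ∨ v = 1 ∨ v = 2 ∨ v = 3 ∨ v = 4 ∨ v = 5 ∨ v = 6 ∨ v = 7 ∨ v = 8 ∨
      v = 9 ∨ v = 10 ∨ v = 11 ∨ v = 12 ∨ v = 13 := by revert v; decide
  rcases hv with rfl|rfl|rfl|rfl|rfl|rfl|rfl|rfl|rfl|rfl|rfl|rfl|rfl|rfl <;> assumption

/-- A parity-preserving involutive automorphism of the Heawood graph fixes both
endpoints of some edge. -/
lemma heawood_invol_fixes_edge (γ : heawood ≃g heawood)
    (h2 : ∀ v, γ (γ v) = v) (hpres : (γ 0).val % 2 = 0) :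
    ∃ u v : ZMod 14, heawood.Adj u v ∧ γ u = u ∧ γ v = v := by
  have hpar : ∀ v : ZMod 14, (γ v).val % 2 = v.val % 2 := by
    intro v
    have := heawood_parity_formula γ v
    omega
  -- fixed even vertex
  have hcard : (Finset.univ.filter (fun v : ZMod 14 => v.val % 2 = 0)).card = 7 := by decide
  obtain ⟨v, hv, hvfix⟩ := odd_invol_fix (fun x => γ x)
      (Finset.univ.filter (fun v : ZMod 14 => v.val % 2 = 0))
      (by
        intro x hx
        simp only [Finset.mem_filter, Finset.mem_univ, true_and] at hx ⊢
        rw [hpar]; exact hx)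
      (by intro x _; exact h2 x)
      (by rw [hcard]; exact ⟨3, rfl⟩)
  -- fixed neighbor of v
  have hncard : ∀ u : ZMod 14, (Finset.univ.filter (fun w => heawood.Adj u w)).card = 3 := by
    decide
  obtain ⟨w, hw, hwfix⟩ := odd_invol_fix (fun x => γ x)
      (Finset.univ.filter (fun w => heawood.Adj v w))
      (by
        intro x hx
        simp only [Finset.mem_filter, Finset.mem_univ, true_and] at hx ⊢
        have := γ.map_adj_iff.mpr hx
        rwa [hvfix] at this)
      (by intro x _; exact h2 x)
      (by rw [hncard v]; exact ⟨1, rfl⟩)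
  simp only [Finset.mem_filter, Finset.mem_univ, true_and] at hw
  exact ⟨v, w, hw, hvfix, hwfix⟩

/-- If `α` and `β` are commuting automorphisms of the Heawood graph such that `α`, `β`,
and `α * β` each have order 2, then at least one of `α`, `β`, `α * β` fixes both
endpoints of some edge of the Heawood graph; in particular at least one of them fixes
a vertex. -/
theorem heawood_klein_four_fixes_edge (α β : heawood ≃g heawood)
    (hcomm : Commute α β) (hα : orderOf α = 2) (hβ : orderOf β = 2)
    (hαβ : orderOf (α * β) = 2) :
    (∃ γ ∈ ({α, β, α * β} : Set (heawood ≃g heawood)),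
        ∃ u v : ZMod 14, heawood.Adj u v ∧ γ u = u ∧ γ v = v) ∧
      ∃ γ ∈ ({α, β, α * β} : Set (heawood ≃g heawood)), ∃ u : ZMod 14, γ u = u := by
  have invol : ∀ γ : heawood ≃g heawood, orderOf γ = 2 → ∀ v, γ (γ v) = v := by
    intro γ hγ v
    have h := pow_orderOf_eq_one γ
    rw [hγ, sq] at h
    exact congrArg (fun (e : heawood ≃g heawood) => e v) h
  have key : ∃ γ ∈ ({α, β, α * β} : Set (heawood ≃g heawood)),
      ∃ u v : ZMod 14, heawood.Adj u v ∧ γ u = u ∧ γ v = v := by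
    by_cases ha : (α 0).val % 2 = 0
    · exact ⟨α, Or.inl rfl,
        heawood_invol_fixes_edge α (invol α hα) ha⟩
    · by_cases hb : (β 0).val % 2 = 0
      · exact ⟨β, Or.inr (Or.inl rfl),
          heawood_invol_fixes_edge β (invol β hβ) hb⟩
      · refine ⟨α * β, Or.inr (Or.inr rfl),
          heawood_invol_fixes_edge (α * β) (invol (α * β) hαβ) ?_⟩
        have h1 : ((α * β) 0).val % 2 = ((α 0).val + (β 0).val) % 2 := by
          have := heawood_parity_formula α (β 0)
          exact this
        have h2 : (α 0).val % 2 < 2 := Nat.mod_lt _ (by norm_num)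
        have h3 : (β 0).val % 2 < 2 := Nat.mod_lt _ (by norm_num)
        omega
  refine ⟨key, ?_⟩
  obtain ⟨γ, hγ, u, v, _, hu, _⟩ := key
  exact ⟨γ, hγ, u, hu⟩
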